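/- Let u be a class of morphisms of F𝒞 between weakly bounded filtered objects such that: u contains all isomorphisms between weakly bounded objects; u satisfies two-out-of-three among morphisms between weakly bounded objects; u contains every level weak equivalence between weakly bounded objects; and u contains θ_x for every weakly bounded filtered object x. Then u contains every stable weak equivalence between weakly bounded filtered objects. Consequently, the restriction of w_st to F_wb𝒞 is the smallest admissible class of morphisms of F_wb𝒞 containing lw and all the morphisms θ_x. -/

import Mathlib

open CategoryTheory CategoryTheory.Limits ZeroObject

universe v u

/-- An *admissible class* of morphisms in an abelian category: it contains all
isomorphisms, satisfies the two-out-of-three property, and in any morphism of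
short exact sequences, if two of the three vertical morphisms lie in the class
then so does the third. -/
structure AdmissibleClass {C : Type u} [Category.{v} C] [Abelian C]
    (w : MorphismProperty C) : Prop where
  of_isIso : ∀ {x y : C} (f : x ⟶ y), IsIso f → w f
  comp_mem : ∀ {x y z : C} (f : x ⟶ y) (g : y ⟶ z), w f → w g → w (f ≫ g)
  of_comp_left : ∀ {x y z : C} (f : x ⟶ y) (g : y ⟶ z), w g → w (f ≫ g) → w f
  of_comp_right : ∀ {x y z : C} (f : x ⟶ y) (g : y ⟶ z), w f → w (f ≫ g) → w g
  ses_fst : ∀ {S₁ S₂ : ShortComplex C}, S₁.ShortExact → S₂.ShortExact →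
    ∀ (φ : S₁ ⟶ S₂), w φ.τ₂ → w φ.τ₃ → w φ.τ₁
  ses_snd : ∀ {S₁ S₂ : ShortComplex C}, S₁.ShortExact → S₂.ShortExact →
    ∀ (φ : S₁ ⟶ S₂), w φ.τ₁ → w φ.τ₃ → w φ.τ₂
  ses_trd : ∀ {S₁ S₂ : ShortComplex C}, S₁.ShortExact → S₂.ShortExact →
    ∀ (φ : S₁ ⟶ S₂), w φ.τ₁ → w φ.τ₂ → w φ.τ₃

variable {C : Type u} [Category.{v} C] [Abelian C]

/-- The class `lw` of level weak equivalences in the category `F𝒞 = ℕ ⥤ 𝒞` of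
filtered objects: morphisms all of whose components lie in `w`. -/
def LevelWeq (w : MorphismProperty C) : MorphismProperty (ℕ ⥤ C) :=
  fun _ _ f => ∀ n : ℕ, w (f.app n)

/-- The class `w_st` of stable weak equivalences in `F𝒞 = ℕ ⥤ 𝒞`: morphisms
whose components eventually lie in `w`. -/
def StableWeq (w : MorphismProperty C) : MorphismProperty (ℕ ⥤ C) :=
  fun _ _ f => ∃ N : ℕ, ∀ n : ℕ, N ≤ n → w (f.app n)

/-- A filtered object is *weakly bounded* if its transition maps eventually
lie in `w`. -/
def WeaklyBounded (w : MorphismProperty C) (x : ℕ ⥤ C) : Prop :=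
  ∃ N : ℕ, ∀ n : ℕ, N ≤ n → w (x.map (homOfLE (Nat.le_succ n)))

/-- A filtered object is *bounded* if its transition maps are eventually
isomorphisms. -/
def BoundedFiltered (x : ℕ ⥤ C) : Prop :=
  ∃ b : ℕ, ∀ n : ℕ, b ≤ n → IsIso (x.map (homOfLE (Nat.le_succ n)))

/-- The shift `x[1]` of a filtered object: `(x[1])_k = x_{k+1}`. -/
def shiftOne (x : ℕ ⥤ C) : ℕ ⥤ C :=
  (Monotone.functor (f := fun n : ℕ => n + 1) fun _ _ h => Nat.succ_le_succ h) ⋙ x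

/-- The morphism `θ_x : x ⟶ x[1]`, whose component at level `k` is the
transition map `i^x_k : x_k ⟶ x_{k+1}`. -/
def theta (x : ℕ ⥤ C) : x ⟶ shiftOne x where
  app k := x.map (homOfLE (Nat.le_succ k))
  naturality k m f := by
    dsimp [shiftOne, Monotone.functor]
    rw [← x.map_comp, ← x.map_comp]
    exact congrArg x.map (Subsingleton.elim _ _)

theorem stableWeq_smallest_on_weaklyBounded {w : MorphismProperty C}
    (hw : AdmissibleClass w)
    (u : MorphismProperty (ℕ ⥤ C))
    (h_iso : ∀ {x y : ℕ ⥤ C} (f : x ⟶ y), WeaklyBounded w x → WeaklyBounded w y →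
      IsIso f → u f)
    (h_comp : ∀ {x y z : ℕ ⥤ C} (f : x ⟶ y) (g : y ⟶ z), WeaklyBounded w x →
      WeaklyBounded w y → WeaklyBounded w z → u f → u g → u (f ≫ g))
    (h_left : ∀ {x y z : ℕ ⥤ C} (f : x ⟶ y) (g : y ⟶ z), WeaklyBounded w x →
      WeaklyBounded w y → WeaklyBounded w z → u g → u (f ≫ g) → u f)
    (h_right : ∀ {x y z : ℕ ⥤ C} (f : x ⟶ y) (g : y ⟶ z), WeaklyBounded w x →
      WeaklyBounded w y → WeaklyBounded w z → u f → u (f ≫ g) → u g)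
    (h_lw : ∀ {x y : ℕ ⥤ C} (f : x ⟶ y), WeaklyBounded w x → WeaklyBounded w y →
      LevelWeq w f → u f)
    (h_theta : ∀ x : ℕ ⥤ C, WeaklyBounded w x → u (theta x)) :
    ∀ {x y : ℕ ⥤ C} (f : x ⟶ y), WeaklyBounded w x → WeaklyBounded w y →
      StableWeq w f → u f := by
  suffices h : ∀ N : ℕ, ∀ {x y : ℕ ⥤ C} (f : x ⟶ y), WeaklyBounded w x →
      WeaklyBounded w y → (∀ n, N ≤ n → w (f.app n)) → u f by
    rintro x y f hx hy ⟨N, hN⟩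
    exact h N f hx hy hN
  intro N
  induction N with
  | zero =>
    intro x y f hx hy hf
    exact h_lw f hx hy (fun n => hf n (Nat.zero_le n))
  | succ N ih =>
    intro x y f hx hy hf
    have shiftWB : ∀ (z : ℕ ⥤ C), WeaklyBounded w z → WeaklyBounded w (shiftOne z) := by
      rintro z ⟨M, hM⟩
      refine ⟨M, fun n hn => ?_⟩
      exact hM (n + 1) (le_trans hn (Nat.le_succ n))
    have hxs := shiftWB x hx
    have hys := shiftWB y hy
    have hsf : u (CategoryTheory.Functor.whiskerLeft
        (Monotone.functor (f := fun n : ℕ => n + 1) fun _ _ h => Nat.succ_le_succ h) f) := by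
      refine ih _ hxs hys (fun n hn => ?_)
      exact hf (n + 1) (Nat.succ_le_succ hn)
    have hcomm : f ≫ theta y = theta x ≫ CategoryTheory.Functor.whiskerLeft
        (Monotone.functor (f := fun n : ℕ => n + 1) fun _ _ h => Nat.succ_le_succ h) f := by
      ext n
      exact (f.naturality (homOfLE (Nat.le_succ n))).symm
    have hcmp := h_comp (theta x) _ hx hxs hys (h_theta x hx) hsf
    replace hcmp : u (f ≫ theta y) := by rw [hcomm]; exact hcmp
    exact h_left f (theta y) hx hy hys (h_theta y hy) hcmp
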